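/- Let Ψ(t) = exp(tL) be the linearized flow of the planar circular orbit as above, and Ω = diag([[0,1],[-1,0]], [[0,1],[-1,0]]). Then Ω·L = diag(1/ω₀², 1/ω₀⁴, 1, 1/ω₀⁶) is positive definite; hence at every crossing t ∈ 2πω₀³ℤ (where Ψ(t) = Id) the crossing form has signature 4. -/

import Mathlib

open Real Matrix

noncomputable section

/-- The linearization matrix of the planar circular orbit. -/
def linMat (ω₀ : ℝ) : Matrix (Fin 4) (Fin 4) ℝ :=
  !![0, -1 / ω₀ ^ 4, 0, 0;
     1 / ω₀ ^ 2, 0, 0, 0;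
     0, 0, 0, -1 / ω₀ ^ 6;
     0, 0, 1, 0]

/-- The standard symplectic matrix Ω = diag([[0,1],[-1,0]], [[0,1],[-1,0]]). -/
def Omega4 : Matrix (Fin 4) (Fin 4) ℝ :=
  !![0, 1, 0, 0;
     -1, 0, 0, 0;
     0, 0, 0, 1;
     0, 0, -1, 0]

lemma linMat_sq (ω₀ : ℝ) (hω : ω₀ ≠ 0) :
    (ω₀ ^ 3 • linMat ω₀) * (ω₀ ^ 3 • linMat ω₀) = -1 := by
  ext i j
  fin_cases i <;> fin_cases j <;>
    · simp [linMat, Matrix.mul_apply, Fin.sum_univ_four, Matrix.one_apply,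
        Matrix.vecHead, Matrix.vecTail]
      try field_simp
      try ring

/-- Ω·L = diag(1/ω₀², 1/ω₀⁴, 1, 1/ω₀⁶) is positive definite, so at every crossing
t ∈ 2πω₀³ℤ (where exp(tL) = Id) the crossing form has signature 4. -/
theorem crossing_form_signature_four (ω₀ : ℝ) (hω : ω₀ ≠ 0) :
    Omega4 * linMat ω₀
      = Matrix.diagonal ![1 / ω₀ ^ 2, 1 / ω₀ ^ 4, 1, 1 / ω₀ ^ 6] ∧
    (Omega4 * linMat ω₀).PosDef ∧
    (∀ m : ℤ, NormedSpace.exp (((2 * Real.pi * ω₀ ^ 3 * (m : ℝ)) • linMat ω₀)) = 1) ∧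
    (∀ v : Fin 4 → ℝ, v ≠ 0 → 0 < v ⬝ᵥ (Omega4 * linMat ω₀).mulVec v) := by
  have hdiag : Omega4 * linMat ω₀
      = Matrix.diagonal ![1 / ω₀ ^ 2, 1 / ω₀ ^ 4, 1, 1 / ω₀ ^ 6] := by
    ext i j
    fin_cases i <;> fin_cases j <;>
      · simp [Omega4, linMat, Matrix.mul_apply, Fin.sum_univ_four, Matrix.diagonal,
          Matrix.vecHead, Matrix.vecTail]
        try ring
  have hpos : (Omega4 * linMat ω₀).PosDef := by
    rw [hdiag]
    refine Matrix.posDef_diagonal_iff.mpr ?_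
    intro i
    fin_cases i <;> simp <;> positivity
  refine ⟨hdiag, hpos, ?_, ?_⟩
  · intro m
    set K : Matrix (Fin 4) (Fin 4) ℝ := ω₀ ^ 3 • linMat ω₀ with hK
    have hK2 : K * K = -1 := linMat_sq ω₀ hω
    letI : SeminormedRing (Matrix (Fin 4) (Fin 4) ℝ) := Matrix.linftyOpSemiNormedRing
    letI : NormedRing (Matrix (Fin 4) (Fin 4) ℝ) := Matrix.linftyOpNormedRing
    letI : NormedAlgebra ℝ (Matrix (Fin 4) (Fin 4) ℝ) := Matrix.linftyOpNormedAlgebra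
    let f : ℂ →ₐ[ℝ] Matrix (Fin 4) (Fin 4) ℝ := Complex.liftAux K hK2
    have hfc : Continuous f := f.toLinearMap.continuous_of_finiteDimensional
    have hsmul : (2 * Real.pi * ω₀ ^ 3 * (m : ℝ)) • linMat ω₀
        = f ((2 * Real.pi * (m : ℝ)) • Complex.I) := by
      rw [_root_.map_smul, Complex.liftAux_apply_I]
      rw [hK, smul_smul]
      ring_nf
    rw [hsmul]
    erw [← NormedSpace.map_exp f hfc]
    have : NormedSpace.exp ((2 * Real.pi * (m : ℝ)) • Complex.I) = 1 := by
      rw [← Complex.exp_eq_exp_ℂ, Complex.real_smul]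
      push_cast
      rw [show ((2 : ℂ) * (Real.pi : ℂ) * (m : ℂ)) * Complex.I
          = (m : ℂ) * (2 * (Real.pi : ℂ) * Complex.I) by ring]
      exact Complex.exp_int_mul_two_pi_mul_I m
    rw [this, _root_.map_one]
  · intro v hv
    have := hpos.dotProduct_mulVec_pos hv
    simpa using this
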